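/- Let Q = {(u,x) ∈ Q^p × Q^q | A u + B x ≤ c} be a full-dimensional pointed polyhedron with [A B] of full column rank, and assume the first q rows of B are linearly independent. Let B₀ = [[B₁, 0],[B₂, I_{m−q}]] where B₁, B₂ are the first q and last m−q rows of B. Define W⁰ = {(v, w, v₀) ∈ Q^q × Q^{m−q} × Q | [vᵀ, wᵀ]B₀⁻¹A = 0, [vᵀ, wᵀ]B₀⁻¹ ≥ 0, −[vᵀ, wᵀ]B₀⁻¹c + v₀ ≥ 0}. Then the polar cone of the homogenized cone of proj(Q; x) equals {(v, −v₀) | (v, v₀) ∈ proj(W⁰; {v, v₀})}. -/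

import Mathlib

section FarkasAux
open Finset

theorem farkas_aux (n : ℕ) : ∀ (σ : Type) (_ : Fintype σ), Fintype.card σ = n →
    ∀ (ι : Type) (_ : Fintype ι) (M : ι → σ → ℚ) (c : ι → ℚ),
    (¬ ∃ x : σ → ℚ, ∀ i, ∑ s, M i s * x s ≤ c i) →
    ∃ z : ι → ℚ, (∀ i, 0 ≤ z i) ∧ (∀ s, ∑ i, z i * M i s = 0) ∧ ∑ i, z i * c i < 0 := by
  classical
  induction n with
  | zero =>
    intro σ _ hcard ι _ M c hinf
    have hσ : IsEmpty σ := Fintype.card_eq_zero_iff.mp hcard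
    push_neg at hinf
    obtain ⟨i₀, hi₀⟩ := hinf fun _ => 0
    have hc : c i₀ < 0 := by
      have h0 : (∑ s, M i₀ s * (0:ℚ)) = 0 := by simp
      rw [h0] at hi₀; linarith
    exact ⟨fun l => if l = i₀ then 1 else 0,
      fun i => by by_cases h : i = i₀ <;> simp [h],
      fun s => hσ.elim s, by simp [ite_mul, hc]⟩
  | succ n ih =>
    intro σ _ hcard ι _ M c hinf
    have hne : Nonempty σ := Fintype.card_pos_iff.mp (by omega)
    obtain ⟨s₀⟩ := hne
    have hcard' : Fintype.card {s : σ // s ≠ s₀} = n := by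
      have h1 := Fintype.card_subtype_compl (fun s : σ => s = s₀)
      simp only [Fintype.card_subtype_eq] at h1
      have h2 : Fintype.card {s : σ // s ≠ s₀} = Fintype.card {s : σ // ¬ s = s₀} := rfl
      omega
    have hsplit : ∀ f : σ → ℚ, ∑ s, f s = f s₀ + ∑ s' : {s : σ // s ≠ s₀}, f s'.val := by
      intro f
      rw [← Finset.add_sum_erase (univ : Finset σ) f (mem_univ s₀)]
      congr 1
      exact Finset.sum_subtype _ (fun x => by simp) f
    set p : ι → ℚ := fun i => M i s₀ with hp
    set α : ι → ι → ι → ℚ := fun i k l =>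
      if p i = 0 ∧ i = k then (if l = i then 1 else 0)
      else if 0 < p i ∧ p k < 0 then
        (if l = i then 1 / p i else 0) + (if l = k then 1 / (- p k) else 0)
      else 0 with hα
    have hα0 : ∀ i k l, 0 ≤ α i k l := by
      intro i k l
      simp only [hα]
      by_cases h1 : p i = 0 ∧ i = k
      · rw [if_pos h1]; by_cases h : l = i <;> simp [h]
      · rw [if_neg h1]
        by_cases h2 : 0 < p i ∧ p k < 0
        · rw [if_pos h2]
          have e1 : (0:ℚ) ≤ 1 / p i := div_nonneg zero_le_one (le_of_lt h2.1)
          have e2 : (0:ℚ) ≤ 1 / (- p k) := div_nonneg zero_le_one (by linarith [h2.2])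
          apply add_nonneg
          · by_cases h : l = i
            · rw [if_pos h]; exact e1
            · rw [if_neg h]
          · by_cases h : l = k
            · rw [if_pos h]; exact e2
            · rw [if_neg h]
        · rw [if_neg h2]
    have hαsum : ∀ (i k : ι) (g : ι → ℚ), ∑ l, α i k l * g l =
        if p i = 0 ∧ i = k then g i
        else if 0 < p i ∧ p k < 0 then (1 / p i) * g i + (1 / (- p k)) * g k
        else 0 := by
      intro i k g
      simp only [hα]
      by_cases h1 : p i = 0 ∧ i = k
      · simp only [if_pos h1]
        simp [ite_mul, Finset.sum_ite_eq']
      · simp only [if_neg h1]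
        by_cases h2 : 0 < p i ∧ p k < 0
        · simp only [if_pos h2]
          rw [Finset.sum_congr rfl (fun l _ => add_mul _ _ _), Finset.sum_add_distrib]
          simp [ite_mul, Finset.sum_ite_eq']
        · simp only [if_neg h2]
          simp
    have hαp : ∀ i k, ∑ l, α i k l * p l = 0 := by
      intro i k
      rw [hαsum]
      by_cases h1 : p i = 0 ∧ i = k
      · rw [if_pos h1]; exact h1.1
      · rw [if_neg h1]
        by_cases h2 : 0 < p i ∧ p k < 0
        · rw [if_pos h2]
          have e1 : p i ≠ 0 := ne_of_gt h2.1
          have e2 : p k ≠ 0 := ne_of_lt h2.2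
          field_simp
          norm_num
        · rw [if_neg h2]
    set N : ι × ι → {s : σ // s ≠ s₀} → ℚ := fun ik s => ∑ l, α ik.1 ik.2 l * M l s.val with hN
    set d : ι × ι → ℚ := fun ik => ∑ l, α ik.1 ik.2 l * c l with hd
    have hNinf : ¬ ∃ x' : {s : σ // s ≠ s₀} → ℚ, ∀ ik, ∑ s, N ik s * x' s ≤ d ik := by
      rintro ⟨x', hx'⟩
      set r : ι → ℚ := fun i => ∑ s' : {s : σ // s ≠ s₀}, M i s'.val * x' s' with hr
      have hNval : ∀ ik : ι × ι, ∑ s, N ik s * x' s = ∑ l, α ik.1 ik.2 l * r l := by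
        intro ik
        simp only [hN, hr, Finset.sum_mul, Finset.mul_sum]
        rw [Finset.sum_comm]
        exact Finset.sum_congr rfl fun l _ => Finset.sum_congr rfl fun s _ => by ring
      set U : ι → ℚ := fun i => (c i - r i) / p i with hU
      have hpair : ∀ i k, 0 < p i → p k < 0 → U k ≤ U i := by
        intro i k hi hk
        have h1 := hx' (i, k)
        rw [hNval] at h1
        simp only [hd] at h1
        rw [hαsum, hαsum] at h1
        have hcond : ¬ (p i = 0 ∧ i = k) := fun h => absurd h.1 (ne_of_gt hi)
        rw [if_neg hcond, if_pos ⟨hi, hk⟩, if_neg hcond, if_pos ⟨hi, hk⟩] at h1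
        have h3 : (0:ℚ) ≤ 1 / p i * (c i - r i) + 1 / (- p k) * (c k - r k) := by linarith
        have h4 : 1 / p i * (c i - r i) = (c i - r i) / p i := by ring
        have h5 : 1 / (- p k) * (c k - r k) = -((c k - r k) / p k) := by
          rw [div_neg]; ring
        simp only [hU]
        rw [h4, h5] at h3
        linarith
      set Pset := (univ : Finset ι).filter (fun i => 0 < p i) with hPset
      set Nset := (univ : Finset ι).filter (fun i => p i < 0) with hNset
      set t : ℚ := if hP : Pset.Nonempty then Pset.inf' hP U
        else if hN2 : Nset.Nonempty then Nset.sup' hN2 U else 0 with ht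
      have hub : ∀ i, 0 < p i → t ≤ U i := by
        intro i hi
        have hiP : i ∈ Pset := by simp [hPset, hi]
        rw [ht, dif_pos ⟨i, hiP⟩]
        exact Finset.inf'_le U hiP
      have hlb : ∀ k, p k < 0 → U k ≤ t := by
        intro k hk
        have hkN : k ∈ Nset := by simp [hNset, hk]
        rw [ht]
        split
        · apply Finset.le_inf'
          intro i hiP
          rw [hPset, mem_filter] at hiP
          exact hpair i k hiP.2 hk
        · rw [dif_pos ⟨k, hkN⟩]
          exact Finset.le_sup' U hkN
      apply hinf
      set x : σ → ℚ := fun s => if h : s = s₀ then t else x' ⟨s, h⟩ with hx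
      refine ⟨x, fun i => ?_⟩
      have e : ∑ s, M i s * x s = p i * t + r i := by
        rw [hsplit (fun s => M i s * x s)]
        congr 1
        · show M i s₀ * x s₀ = p i * t
          rw [show x s₀ = t from dif_pos rfl]
        · simp only [hr]
          apply Finset.sum_congr rfl
          intro s' _
          show M i s'.val * x s'.val = M i s'.val * x' s'
          rw [show x s'.val = x' s' from dif_neg s'.prop]
      rw [e]
      rcases lt_trichotomy (p i) 0 with hg | hg | hg
      · have h1 := hlb i hg
        simp only [hU] at h1
        have h2 := (div_le_iff_of_neg hg).mp h1
        linarith [mul_comm t (p i)]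
      · have h1 := hx' (i, i)
        rw [hNval, hαsum] at h1
        simp only [hd] at h1
        rw [hαsum] at h1
        have h2 : r i ≤ c i := by simpa [hg] using h1
        rw [hg]
        linarith
      · have h1 := hub i hg
        simp only [hU] at h1
        rw [le_div_iff₀ hg] at h1
        linarith [mul_comm t (p i)]
    obtain ⟨z', hz'0, hz'M, hz'c⟩ := ih {s : σ // s ≠ s₀} _ hcard' (ι × ι) _ N d hNinf
    set z : ι → ℚ := fun l => ∑ ik : ι × ι, z' ik * α ik.1 ik.2 l with hz
    have hzdot : ∀ g : ι → ℚ, ∑ l, z l * g l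
        = ∑ ik : ι × ι, z' ik * ∑ l, α ik.1 ik.2 l * g l := by
      intro g
      simp only [hz, Finset.sum_mul, Finset.mul_sum]
      rw [Finset.sum_comm]
      exact Finset.sum_congr rfl fun ik _ => Finset.sum_congr rfl fun l _ => by ring
    refine ⟨z, ?_, ?_, ?_⟩
    · intro l
      apply Finset.sum_nonneg
      intro ik _
      exact mul_nonneg (hz'0 ik) (hα0 ik.1 ik.2 l)
    · intro s
      by_cases hs : s = s₀
      · subst hs
        rw [show (∑ i, z i * M i s) = ∑ i, z i * p i from rfl, hzdot p]
        exact Finset.sum_eq_zero fun ik _ => by rw [hαp ik.1 ik.2, mul_zero]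
      · have h1 := hz'M ⟨s, hs⟩
        rw [hzdot (fun l => M l s)]
        exact h1
    · rw [hzdot c]
      exact hz'c

theorem farkas_cone {ι σ : Type} [Fintype ι] [Fintype σ] (M : ι → σ → ℚ) (f : σ → ℚ)
    (h : ∀ x : σ → ℚ, (∀ i, ∑ s, M i s * x s ≤ 0) → ∑ s, f s * x s ≤ 0) :
    ∃ z : ι → ℚ, (∀ i, 0 ≤ z i) ∧ ∀ s, ∑ i, z i * M i s = f s := by
  classical
  set MM : ι ⊕ Unit → σ → ℚ := Sum.elim M (fun _ s => - f s) with hMM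
  set cc : ι ⊕ Unit → ℚ := Sum.elim (fun _ => 0) (fun _ => -1) with hcc
  have hinf : ¬ ∃ x : σ → ℚ, ∀ i', ∑ s, MM i' s * x s ≤ cc i' := by
    rintro ⟨x, hx⟩
    have h1 : ∀ i, ∑ s, M i s * x s ≤ 0 := fun i => hx (Sum.inl i)
    have h2 := hx (Sum.inr ())
    simp only [hMM, hcc, Sum.elim_inr] at h2
    have h3 : ∑ s, -f s * x s = -∑ s, f s * x s := by
      rw [← Finset.sum_neg_distrib]
      exact Finset.sum_congr rfl fun s _ => by ring
    rw [h3] at h2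
    have := h x h1
    linarith
  obtain ⟨Z, hZ0, hZM, hZc⟩ := farkas_aux (Fintype.card σ) σ _ rfl (ι ⊕ Unit) _ MM cc hinf
  have hZcc : ∑ i', Z i' * cc i' = - Z (Sum.inr ()) := by
    rw [Fintype.sum_sum_type]
    simp [hcc]
  rw [hZcc] at hZc
  have hZr : 0 < Z (Sum.inr ()) := by linarith
  refine ⟨fun i => Z (Sum.inl i) / Z (Sum.inr ()), fun i => div_nonneg (hZ0 _) (le_of_lt hZr), ?_⟩
  intro s
  have h1 := hZM s
  rw [Fintype.sum_sum_type] at h1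
  simp only [hMM, Sum.elim_inl, Sum.elim_inr, Finset.univ_unique, Finset.sum_singleton] at h1
  have hne : Z (Sum.inr ()) ≠ 0 := ne_of_gt hZr
  have h2 : ∑ i : ι, Z (Sum.inl i) / Z (Sum.inr ()) * M i s
      = (∑ i : ι, Z (Sum.inl i) * M i s) / Z (Sum.inr ()) := by
    rw [Finset.sum_div]
    exact Finset.sum_congr rfl fun i _ => by ring
  show ∑ i : ι, Z (Sum.inl i) / Z (Sum.inr ()) * M i s = f s
  rw [h2]
  have h3 : ∑ i : ι, Z (Sum.inl i) * M i s = Z (Sum.inr ()) * f s := by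
    have : Z (Sum.inr (default : Unit)) = Z (Sum.inr ()) := rfl
    nlinarith [h1]
  rw [h3, mul_div_assoc]
  field_simp

theorem farkas_le {ι σ : Type} [Fintype ι] [Fintype σ] (M : ι → σ → ℚ) (c : ι → ℚ)
    (f : σ → ℚ) (β : ℚ)
    (hfeas : ∃ x : σ → ℚ, ∀ i, ∑ s, M i s * x s ≤ c i)
    (h : ∀ x : σ → ℚ, (∀ i, ∑ s, M i s * x s ≤ c i) → ∑ s, f s * x s ≤ β) :
    ∃ z : ι → ℚ, (∀ i, 0 ≤ z i) ∧ (∀ s, ∑ i, z i * M i s = f s) ∧ ∑ i, z i * c i ≤ β := by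
  classical
  set MM : ι ⊕ Unit → σ ⊕ Unit → ℚ := fun i' s' =>
    Sum.elim (fun i => Sum.elim (fun s => M i s) (fun _ => - c i) s')
      (fun _ => Sum.elim (fun _ => 0) (fun _ => -1) s') i' with hMM
  set ff : σ ⊕ Unit → ℚ := Sum.elim f (fun _ => - β) with hff
  have hkey : ∀ x : σ ⊕ Unit → ℚ, (∀ i', ∑ s', MM i' s' * x s' ≤ 0) → ∑ s', ff s' * x s' ≤ 0 := by
    intro x hx
    set μ := x (Sum.inr ()) with hμ
    set x1 : σ → ℚ := fun s => x (Sum.inl s) with hx1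
    have hrow : ∀ i, ∑ s, M i s * x1 s - c i * μ ≤ 0 := by
      intro i
      have := hx (Sum.inl i)
      rw [Fintype.sum_sum_type] at this
      simpa [hMM, sub_eq_add_neg, mul_comm] using this
    have hμ0 : 0 ≤ μ := by
      have := hx (Sum.inr ())
      rw [Fintype.sum_sum_type] at this
      simp [hMM] at this
      linarith
    have hgoal : ∑ s, f s * x1 s - β * μ ≤ 0 := by
      rcases eq_or_lt_of_le hμ0 with hμe | hμp
      · -- μ = 0 : recession direction
        have hrow0 : ∀ i, ∑ s, M i s * x1 s ≤ 0 := by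
          intro i; have := hrow i; rw [← hμe] at this; linarith
        rw [← hμe]
        by_contra hcon
        push_neg at hcon
        have hfx : 0 < ∑ s, f s * x1 s := by linarith
        obtain ⟨x₀, hx₀⟩ := hfeas
        set lam : ℚ := max 0 ((β - ∑ s, f s * x₀ s + 1) / (∑ s, f s * x1 s)) with hlam
        have hlam0 : 0 ≤ lam := le_max_left _ _
        have happ := h (fun s => x₀ s + lam * x1 s) (by
          intro i
          have e : ∑ s, M i s * (x₀ s + lam * x1 s)
              = ∑ s, M i s * x₀ s + lam * ∑ s, M i s * x1 s := by
            rw [Finset.mul_sum, ← Finset.sum_add_distrib]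
            exact Finset.sum_congr rfl fun s _ => by ring
          rw [e]
          nlinarith [hrow0 i, hx₀ i])
        have e2 : ∑ s, f s * (x₀ s + lam * x1 s)
            = ∑ s, f s * x₀ s + lam * ∑ s, f s * x1 s := by
          rw [Finset.mul_sum, ← Finset.sum_add_distrib]
          exact Finset.sum_congr rfl fun s _ => by ring
        rw [e2] at happ
        have hlam2 : (β - ∑ s, f s * x₀ s + 1) / (∑ s, f s * x1 s) ≤ lam := le_max_right _ _
        rw [div_le_iff₀ hfx] at hlam2
        linarith
      · -- μ > 0 : scale down
        have happ := h (fun s => x1 s / μ) (by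
          intro i
          have e : ∑ s, M i s * (x1 s / μ) = (∑ s, M i s * x1 s) / μ := by
            rw [Finset.sum_div]
            exact Finset.sum_congr rfl fun s _ => by ring
          rw [e, div_le_iff₀ hμp]
          have := hrow i
          linarith [mul_comm (c i) μ])
        have e2 : ∑ s, f s * (x1 s / μ) = (∑ s, f s * x1 s) / μ := by
          rw [Finset.sum_div]
          exact Finset.sum_congr rfl fun s _ => by ring
        rw [e2, div_le_iff₀ hμp] at happ
        linarith [mul_comm β μ]
    rw [Fintype.sum_sum_type]
    simpa [hff, hx1, hμ, sub_eq_add_neg, mul_comm] using hgoal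
  obtain ⟨Z, hZ0, hZM⟩ := farkas_cone MM ff hkey
  refine ⟨fun i => Z (Sum.inl i), fun i => hZ0 _, ?_, ?_⟩
  · intro s
    have h1 := hZM (Sum.inl s)
    rw [Fintype.sum_sum_type] at h1
    simpa [hMM, hff] using h1
  · have h1 := hZM (Sum.inr ())
    rw [Fintype.sum_sum_type] at h1
    simp [hMM, hff] at h1
    have h2 : ∑ i, Z (Sum.inl i) * c i = β - Z (Sum.inr ()) := by linarith
    rw [h2]
    linarith [hZ0 (Sum.inr ())]

end FarkasAux



open Matrix

/-- The matrix `B₀ = [[B₁, 0], [B₂, I]]` obtained by augmenting `B` (whose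
first `q` rows are `B₁`) with the last `m − q` standard basis columns. -/
def B0mat (m q : ℕ) (B : Matrix (Fin m) (Fin q) ℚ) : Matrix (Fin m) (Fin m) ℚ :=
  Matrix.of fun i j =>
    if h : (j : ℕ) < q then B i ⟨(j : ℕ), h⟩
    else if (i : ℕ) = (j : ℕ) then 1 else 0

/-- The projection `proj(W⁰; {v, v₀})` of the lifted cone
`W⁰ = {(v,w,v₀) | [vᵀ,wᵀ]B₀⁻¹A = 0, [vᵀ,wᵀ]B₀⁻¹ ≥ 0, −[vᵀ,wᵀ]B₀⁻¹c + v₀ ≥ 0}`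
onto the `(v, v₀)` coordinates; here `y` plays the role of `[vᵀ, wᵀ]`. -/
def projW0 (m p q : ℕ) (hq : q ≤ m) (A : Matrix (Fin m) (Fin p) ℚ)
    (B : Matrix (Fin m) (Fin q) ℚ) (c : Fin m → ℚ) : Set ((Fin q → ℚ) × ℚ) :=
  { vv | ∃ y : Fin m → ℚ,
      (∀ i : Fin q, y (Fin.castLE hq i) = vv.1 i) ∧
      Matrix.vecMul (Matrix.vecMul y (B0mat m q B)⁻¹) A = 0 ∧
      0 ≤ Matrix.vecMul y (B0mat m q B)⁻¹ ∧
      0 ≤ -(Matrix.vecMul y (B0mat m q B)⁻¹ ⬝ᵥ c) + vv.2 }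

/-- The projection `proj(Q; x)` of `Q = {(u,x) | A u + B x ≤ c}`. -/
def projQx (m p q : ℕ) (A : Matrix (Fin m) (Fin p) ℚ)
    (B : Matrix (Fin m) (Fin q) ℚ) (c : Fin m → ℚ) : Set (Fin q → ℚ) :=
  { x | ∃ u : Fin p → ℚ, A.mulVec u + B.mulVec x ≤ c }

/-- The homogenized cone of a set `P`: points `(x, x_last)` with `x_last > 0`
and `x / x_last ∈ P`, or `x_last = 0` and `x` a recession direction of `P`. -/
def homConeSet (q : ℕ) (P : Set (Fin q → ℚ)) : Set ((Fin q → ℚ) × ℚ) :=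
  { z | (0 < z.2 ∧ (z.2⁻¹ • z.1) ∈ P) ∨
        (z.2 = 0 ∧ ∀ x ∈ P, ∀ lam : ℚ, 0 ≤ lam → x + lam • z.1 ∈ P) }

theorem B0_isUnit (m q : ℕ) (hq : q ≤ m) (B : Matrix (Fin m) (Fin q) ℚ)
    (hindep : LinearIndependent ℚ (fun i : Fin q => B (Fin.castLE hq i))) :
    IsUnit (B0mat m q B) := by
  classical
  rw [← Matrix.vecMul_injective_iff_isUnit]
  have hker : ∀ z : Fin m → ℚ, Matrix.vecMul z (B0mat m q B) = 0 → z = 0 := by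
    intro z hz
    have hcol : ∀ j : Fin m, ∑ i, z i * B0mat m q B i j = 0 := by
      intro j
      have := congrFun hz j
      simpa [Matrix.vecMul, dotProduct] using this
    have hz2 : ∀ j : Fin m, q ≤ (j : ℕ) → z j = 0 := by
      intro j hj
      have h1 := hcol j
      have e : ∀ i : Fin m, z i * B0mat m q B i j = if i = j then z i else 0 := by
        intro i
        simp only [B0mat, Matrix.of_apply, dif_neg (not_lt.mpr hj)]
        by_cases hij : i = j
        · subst hij; simp
        · rw [if_neg hij, if_neg (fun hv => hij (Fin.ext hv))]
          ring
      rw [Finset.sum_congr rfl (fun i _ => e i), Finset.sum_ite_eq' Finset.univ j z] at h1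
      simpa using h1
    have hz1 : ∀ i : Fin q, z (Fin.castLE hq i) = 0 := by
      have hcolq : ∀ jq : Fin q, ∑ i : Fin q, z (Fin.castLE hq i) * B (Fin.castLE hq i) jq = 0 := by
        intro jq
        have h1 := hcol (Fin.castLE hq jq)
        have e : ∀ i : Fin m, B0mat m q B i (Fin.castLE hq jq) = B i jq := by
          intro i
          simp only [B0mat, Matrix.of_apply]
          rw [dif_pos (show ((Fin.castLE hq jq : Fin m) : ℕ) < q from jq.isLt)]
          congr 1
        rw [Finset.sum_congr rfl (fun i _ => by rw [e i])] at h1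
        rw [← h1]
        rw [show (∑ i : Fin q, z (Fin.castLE hq i) * B (Fin.castLE hq i) jq)
            = ∑ i ∈ Finset.univ.map ⟨Fin.castLE hq, Fin.castLE_injective hq⟩,
              z i * B i jq from (Finset.sum_map Finset.univ
                ⟨Fin.castLE hq, Fin.castLE_injective hq⟩ (fun i => z i * B i jq)).symm]
        apply Finset.sum_subset (Finset.subset_univ _)
        intro i _ hni
        have hiq : ¬ ((i : ℕ) < q) := by
          intro hlt
          apply hni
          simp only [Finset.mem_map, Finset.mem_univ, Function.Embedding.coeFn_mk]
          exact ⟨⟨(i : ℕ), hlt⟩, trivial, Fin.ext rfl⟩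
        rw [hz2 i (not_lt.mp hiq), zero_mul]
      have hzero : ∑ i : Fin q, z (Fin.castLE hq i) • B (Fin.castLE hq i) = 0 := by
        funext jq
        rw [Finset.sum_apply]
        simpa [smul_eq_mul] using hcolq jq
      exact Fintype.linearIndependent_iff.mp hindep _ hzero
    funext j
    by_cases hj : (j : ℕ) < q
    · have := hz1 ⟨(j : ℕ), hj⟩
      rwa [show Fin.castLE hq ⟨(j : ℕ), hj⟩ = j from Fin.ext rfl] at this
    · exact hz2 j (not_lt.mp hj)
  intro z1 z2 he
  have h := hker (z1 - z2) (by
    rw [Matrix.sub_vecMul]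
    have he' : Matrix.vecMul z1 (B0mat m q B) = Matrix.vecMul z2 (B0mat m q B) := he
    rw [he']
    simp)
  exact sub_eq_zero.mp h




open Matrix


/-- Revisited Balas theorem: for a full-dimensional pointed polyhedron
`Q = {(u,x) | A u + B x ≤ c}` with `[A B]` of full column rank and the first
`q` rows of `B` linearly independent, the polar cone of the homogenized cone
of `proj(Q; x)` equals `{(v, −v₀) | (v, v₀) ∈ proj(W⁰; {v, v₀})}`. -/
theorem balas_revisited (m p q : ℕ) (hq : q ≤ m)
    (A : Matrix (Fin m) (Fin p) ℚ) (B : Matrix (Fin m) (Fin q) ℚ)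
    (c : Fin m → ℚ)
    (hfulldim : affineSpan ℚ
      {z : (Fin p → ℚ) × (Fin q → ℚ) | A.mulVec z.1 + B.mulVec z.2 ≤ c} = ⊤)
    (hpointed : (Matrix.fromCols A B).rank = p + q)
    (hindep : LinearIndependent ℚ (fun i : Fin q => B (Fin.castLE hq i))) :
    { z : (Fin q → ℚ) × ℚ |
        ∀ w ∈ homConeSet q (projQx m p q A B c), z.1 ⬝ᵥ w.1 + z.2 * w.2 ≤ 0 } =
      { z : (Fin q → ℚ) × ℚ |
        ∃ vv ∈ projW0 m p q hq A B c, z = (vv.1, -vv.2) } := by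
  classical
  -- `Q` is nonempty
  have hQne : ∃ w : (Fin p → ℚ) × (Fin q → ℚ), A.mulVec w.1 + B.mulVec w.2 ≤ c := by
    by_contra hcon
    push_neg at hcon
    have hem : {z : (Fin p → ℚ) × (Fin q → ℚ) | A.mulVec z.1 + B.mulVec z.2 ≤ c}
        = (∅ : Set _) := by
      ext w
      simp only [Set.mem_setOf_eq, Set.mem_empty_iff_false, iff_false]
      exact hcon w
    rw [hem, AffineSubspace.span_empty] at hfulldim
    have h0 : ((0, 0) : (Fin p → ℚ) × (Fin q → ℚ)) ∈ (⊥ : AffineSubspace ℚ _) := by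
      rw [hfulldim]; trivial
    exact AffineSubspace.notMem_bot ℚ _ _ h0
  obtain ⟨w0, hw0⟩ := hQne
  have hPne : w0.2 ∈ projQx m p q A B c := ⟨w0.1, hw0⟩
  have hB0 : IsUnit (B0mat m q B) := B0_isUnit m q hq B hindep
  have hdet : IsUnit (B0mat m q B).det := (Matrix.isUnit_iff_isUnit_det _).mp hB0
  have hinv1 : ∀ z : Fin m → ℚ,
      Matrix.vecMul (Matrix.vecMul z (B0mat m q B)) (B0mat m q B)⁻¹ = z := by
    intro z
    rw [Matrix.vecMul_vecMul, Matrix.mul_nonsing_inv _ hdet, Matrix.vecMul_one]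
  have hinv2 : ∀ y : Fin m → ℚ,
      Matrix.vecMul (Matrix.vecMul y (B0mat m q B)⁻¹) (B0mat m q B) = y := by
    intro y
    rw [Matrix.vecMul_vecMul, Matrix.nonsing_inv_mul _ hdet, Matrix.vecMul_one]
  have hBcol : ∀ (z : Fin m → ℚ) (i : Fin q),
      Matrix.vecMul z (B0mat m q B) (Fin.castLE hq i) = Matrix.vecMul z B i := by
    intro z i
    simp only [Matrix.vecMul, dotProduct]
    apply Finset.sum_congr rfl
    intro l _
    congr 1
    show B0mat m q B l (Fin.castLE hq i) = B l i
    simp only [B0mat, Matrix.of_apply]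
    rw [dif_pos (show ((Fin.castLE hq i : Fin m) : ℕ) < q from i.isLt)]
    congr 1
  ext zz
  obtain ⟨v, t⟩ := zz
  simp only [Set.mem_setOf_eq]
  constructor
  · intro hpol
    have hvP : ∀ x ∈ projQx m p q A B c, v ⬝ᵥ x + t ≤ 0 := by
      intro x hx
      have h1 := hpol (x, 1) (Or.inl ⟨one_pos, by simpa using hx⟩)
      simpa using h1
    set Mf : Fin m → (Fin p ⊕ Fin q) → ℚ :=
      fun i => Sum.elim (fun s => A i s) (fun s => B i s) with hMf
    have hsum : ∀ (i : Fin m) (x : (Fin p ⊕ Fin q) → ℚ),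
        ∑ s, Mf i s * x s
          = A.mulVec (fun s => x (Sum.inl s)) i + B.mulVec (fun s => x (Sum.inr s)) i := by
      intro i x
      rw [Fintype.sum_sum_type]
      simp [hMf, Matrix.mulVec, dotProduct]
    have hfeas : ∃ x : (Fin p ⊕ Fin q) → ℚ, ∀ i, ∑ s, Mf i s * x s ≤ c i := by
      refine ⟨Sum.elim w0.1 w0.2, fun i => ?_⟩
      rw [hsum]
      exact hw0 i
    have himp : ∀ x : (Fin p ⊕ Fin q) → ℚ, (∀ i, ∑ s, Mf i s * x s ≤ c i) →
        ∑ s, Sum.elim (fun _ : Fin p => (0:ℚ)) v s * x s ≤ -t := by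
      intro x hx
      have hmem : (fun s => x (Sum.inr s)) ∈ projQx m p q A B c := by
        refine ⟨fun s => x (Sum.inl s), fun i => ?_⟩
        have h1 := hx i
        rw [hsum i x] at h1
        exact h1
      have h2 := hvP _ hmem
      rw [Fintype.sum_sum_type]
      simp only [Sum.elim_inl, Sum.elim_inr, zero_mul, Finset.sum_const_zero, zero_add]
      have e : v ⬝ᵥ (fun s => x (Sum.inr s)) = ∑ s : Fin q, v s * x (Sum.inr s) := rfl
      linarith [e ▸ h2]
    obtain ⟨z, hz0, hzM, hzc⟩ :=
      farkas_le Mf c (Sum.elim (fun _ : Fin p => (0:ℚ)) v) (-t) hfeas himp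
    refine ⟨(v, -t), ⟨Matrix.vecMul z (B0mat m q B), ?_, ?_, ?_, ?_⟩, by simp⟩
    · intro i
      rw [hBcol]
      have h1 := hzM (Sum.inr i)
      simpa [hMf, Matrix.vecMul, dotProduct] using h1
    · rw [hinv1]
      funext s
      have h1 := hzM (Sum.inl s)
      simpa [hMf, Matrix.vecMul, dotProduct] using h1
    · rw [hinv1]
      exact fun i => hz0 i
    · rw [hinv1]
      have e : z ⬝ᵥ c = ∑ i, z i * c i := rfl
      dsimp only
      linarith [e ▸ hzc]
  · rintro ⟨vv, ⟨y, hy1, hy2, hy3, hy4⟩, heq⟩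
    rw [Prod.mk.injEq] at heq
    obtain ⟨hv, ht⟩ := heq
    subst hv; subst ht
    set zc : Fin m → ℚ := Matrix.vecMul y (B0mat m q B)⁻¹ with hzc
    have hzB : ∀ i, Matrix.vecMul zc B i = vv.1 i := by
      intro i
      rw [← hBcol zc i, hzc, hinv2]
      exact hy1 i
    have hkey : ∀ x ∈ projQx m p q A B c, vv.1 ⬝ᵥ x ≤ zc ⬝ᵥ c := by
      rintro x ⟨u, hu⟩
      have e1 : vv.1 ⬝ᵥ x = Matrix.vecMul zc B ⬝ᵥ x := by
        congr 1
        exact (funext hzB).symm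
      have e2 : zc ⬝ᵥ (A.mulVec u) = 0 := by
        rw [Matrix.dotProduct_mulVec, hy2, zero_dotProduct]
      have e3 : Matrix.vecMul zc B ⬝ᵥ x = zc ⬝ᵥ (A.mulVec u + B.mulVec x) := by
        rw [dotProduct_add, e2, zero_add, Matrix.dotProduct_mulVec]
      rw [e1, e3]
      exact dotProduct_le_dotProduct_of_nonneg_left hu hy3
    have hzc2 : zc ⬝ᵥ c ≤ vv.2 := by linarith [hy4]
    intro w hw
    rcases hw with ⟨hw2, hwm⟩ | ⟨hw2, hrec⟩
    · have h1 := le_trans (hkey _ hwm) hzc2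
      have e : vv.1 ⬝ᵥ (w.2⁻¹ • w.1) = w.2⁻¹ * (vv.1 ⬝ᵥ w.1) := by
        rw [dotProduct_smul]; rfl
      rw [e] at h1
      have h3 := mul_le_mul_of_nonneg_left h1 (le_of_lt hw2)
      have h4 : w.2 * (w.2⁻¹ * (vv.1 ⬝ᵥ w.1)) = vv.1 ⬝ᵥ w.1 := by
        field_simp
      nlinarith [h3, h4]
    · have hd : vv.1 ⬝ᵥ w.1 ≤ 0 := by
        by_contra hcon
        push_neg at hcon
        set lam : ℚ := max 0 ((vv.2 - vv.1 ⬝ᵥ w0.2 + 1) / (vv.1 ⬝ᵥ w.1)) with hlam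
        have h1 := le_trans (hkey _ (hrec w0.2 hPne lam (le_max_left _ _))) hzc2
        have e : vv.1 ⬝ᵥ (w0.2 + lam • w.1)
            = vv.1 ⬝ᵥ w0.2 + lam * (vv.1 ⬝ᵥ w.1) := by
          rw [dotProduct_add, dotProduct_smul]; rfl
        rw [e] at h1
        have h2 : (vv.2 - vv.1 ⬝ᵥ w0.2 + 1) / (vv.1 ⬝ᵥ w.1) ≤ lam := le_max_right _ _
        rw [div_le_iff₀ hcon] at h2
        linarith
      rw [hw2]
      linarith [hd]
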